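/- arXiv:cs/0408045 — 6 statements merged into one kernel-verified Lean document; each statement's English description precedes it below -/
import Mathlib

section
/- Let f⃗ : 𝔹ⁿ → 𝔹ⁿ be the tuple function of the monotone functions f₁,…,fₙ, and let g_{S,i} be the pruned family of functions. Then the Pruned Closed Form equals the n-fold iterate of f⃗ on the bottom element: g⃗_∅(0⃗) = f⃗ⁿ(0⃗), where g⃗_∅(0⃗) = (g_{∅,1}(0⃗), …, g_{∅,n}(0⃗)). -/
/-- The pruned family of functions `g_{S,i}`: `g_{S,i} = f_i ∘ (g_{S∪{i},1},…,g_{S∪{i},n})`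
if `i ∉ S`, and the constant-`false` (constant-0) function if `i ∈ S`. -/
def prunedG (n : ℕ) (f : Fin n → (Fin n → Bool) → Bool) :
    Finset (Fin n) → Fin n → (Fin n → Bool) → Bool
  | S, i => fun x =>
    if h : i ∈ S then false
    else f i (fun j => prunedG n f (insert i S) j x)
termination_by S _ => n - S.card
decreasing_by
  have h1 : (insert i S).card = S.card + 1 := Finset.card_insert_of_notMem h
  have h2 : (insert i S).card ≤ n := by
    simpa using Finset.card_le_univ (insert i S)
  omega

namespace PrunedAux

variable {n : ℕ}

/-- One step of the iterate chain. -/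
lemma iter_le_succ (F : (Fin n → Bool) → (Fin n → Bool)) (hF : Monotone F) (k : ℕ) :
    F^[k] (fun _ => false) ≤ F^[k + 1] (fun _ => false) := by
  induction k with
  | zero => intro i; simp
  | succ k ih =>
      rw [Function.iterate_succ_apply', Function.iterate_succ_apply']
      exact hF ih

lemma iter_mono (F : (Fin n → Bool) → (Fin n → Bool)) (hF : Monotone F) :
    Monotone fun k => F^[k] (fun _ => false) :=
  monotone_nat_of_le_succ (iter_le_succ F hF)

/-- The set of true coordinates at stage `k`. -/
noncomputable def Tk (F : (Fin n → Bool) → (Fin n → Bool)) (k : ℕ) : Finset (Fin n) :=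
  Finset.univ.filter fun i => F^[k] (fun _ => false) i = true

lemma card_grow (F : (Fin n → Bool) → (Fin n → Bool)) (hF : Monotone F) (k : ℕ)
    (hne : F^[k + 1] (fun _ => false) ≠ F^[k] (fun _ => false)) :
    (Tk F k).card < (Tk F (k + 1)).card := by
  have hle := iter_le_succ F hF k
  apply Finset.card_lt_card
  constructor
  · intro i hi
    simp only [Tk, Finset.mem_filter, Finset.mem_univ, true_and] at hi ⊢
    have := hle i
    rw [hi] at this
    exact Bool.eq_true_of_true_le this
  · intro hsub
    apply hne
    funext i
    have h1 := hle i
    by_cases h : F^[k + 1] (fun _ => false) i = true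
    · have hmem : i ∈ Tk F (k + 1) := by
        simp only [Tk, Finset.mem_filter, Finset.mem_univ, true_and]
        exact h
      have hmem2 : i ∈ Tk F k := hsub hmem
      simp only [Tk, Finset.mem_filter, Finset.mem_univ, true_and] at hmem2
      exact h.trans hmem2.symm
    · simp only [Bool.not_eq_true] at h
      have h2 := hle i
      rw [h] at h2
      have h3 : F^[k] (fun _ => false) i = false := le_antisymm h2 (Bool.false_le _)
      exact h.trans h3.symm
      
lemma stab_aux (F : (Fin n → Bool) → (Fin n → Bool)) (hF : Monotone F) (k : ℕ)
    (h : ∀ j < k, F^[j + 1] (fun _ => false) ≠ F^[j] (fun _ => false)) :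
    k ≤ (Tk F k).card := by
  induction k with
  | zero => exact Nat.zero_le _
  | succ k ih =>
      have h1 : k ≤ (Tk F k).card := ih fun j hj => h j (Nat.lt_succ_of_lt hj)
      have h2 := card_grow F hF k (h k (Nat.lt_succ_self k))
      omega

lemma stab_prop (F : (Fin n → Bool) → (Fin n → Bool)) (j : ℕ)
    (h : F^[j + 1] (fun _ => false) = F^[j] (fun _ => false)) (m : ℕ) :
    F^[j + m] (fun _ => false) = F^[j] (fun _ => false) := by
  induction m with
  | zero => rfl
  | succ m ih =>
      have : j + (m + 1) = (j + m) + 1 := by omega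
      rw [this, Function.iterate_succ_apply', ih,
        ← Function.iterate_succ_apply' F j (fun _ => false), h]

/-- The Kleene chain stabilizes after `n` steps. -/
lemma stab (F : (Fin n → Bool) → (Fin n → Bool)) (hF : Monotone F) :
    F (F^[n] (fun _ => false)) = F^[n] (fun _ => false) := by
  have hex : ∃ j ≤ n, F^[j + 1] (fun _ => false) = F^[j] (fun _ => false) := by
    by_contra hcon
    push_neg at hcon
    have := stab_aux F hF (n + 1) fun j hj => hcon j (by omega)
    have hcard : (Tk F (n + 1)).card ≤ n := by
      simpa using Finset.card_le_univ (Tk F (n + 1))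
    omega
  obtain ⟨j, hj, hfix⟩ := hex
  have h1 : F^[n] (fun _ => false) = F^[j] (fun _ => false) := by
    have := stab_prop F j hfix (n - j)
    rwa [show j + (n - j) = n by omega] at this
  have h2 : F^[n + 1] (fun _ => false) = F^[j] (fun _ => false) := by
    have := stab_prop F j hfix (n + 1 - j)
    rwa [show j + (n + 1 - j) = n + 1 by omega] at this
  rw [← Function.iterate_succ_apply' F n, h2, h1]

/-- The pruned system: coordinates in `S` are forced to `false`. -/
def FS (f : Fin n → (Fin n → Bool) → Bool) (S : Finset (Fin n)) :
    (Fin n → Bool) → (Fin n → Bool) :=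
  fun x i => if i ∈ S then false else f i x

lemma FS_mono (f : Fin n → (Fin n → Bool) → Bool) (hf : ∀ i, Monotone (f i))
    (S : Finset (Fin n)) : Monotone (FS f S) := by
  intro x y hxy i
  simp only [FS]
  split
  · exact le_refl _
  · exact hf i hxy

/-- The candidate least fixpoint of the pruned system. -/
def L (f : Fin n → (Fin n → Bool) → Bool) (S : Finset (Fin n)) : Fin n → Bool :=
  (FS f S)^[n] (fun _ => false)

lemma L_fix (f : Fin n → (Fin n → Bool) → Bool) (hf : ∀ i, Monotone (f i))
    (S : Finset (Fin n)) : FS f S (L f S) = L f S :=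
  stab (FS f S) (FS_mono f hf S)

lemma L_least (f : Fin n → (Fin n → Bool) → Bool) (hf : ∀ i, Monotone (f i))
    (S : Finset (Fin n)) (P : Fin n → Bool) (hP : FS f S P = P) : L f S ≤ P := by
  have : ∀ k, (FS f S)^[k] (fun _ => false) ≤ P := by
    intro k
    induction k with
    | zero => intro i; simp
    | succ k ih =>
        rw [Function.iterate_succ_apply']
        calc FS f S ((FS f S)^[k] fun _ => false) ≤ FS f S P := FS_mono f hf S ih
          _ = P := hP
  exact this n

lemma L_mem_false (f : Fin n → (Fin n → Bool) → Bool) (hf : ∀ i, Monotone (f i))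
    (S : Finset (Fin n)) {i : Fin n} (hi : i ∈ S) : L f S i = false := by
  have := congrFun (L_fix f hf S) i
  rw [← this]
  simp [FS, hi]

lemma L_anti (f : Fin n → (Fin n → Bool) → Bool) (hf : ∀ i, Monotone (f i))
    {S T : Finset (Fin n)} (hST : S ⊆ T) : L f T ≤ L f S := by
  have key : ∀ k, (FS f T)^[k] (fun _ => false) ≤ (FS f S)^[k] (fun _ => false) := by
    intro k
    induction k with
    | zero => exact le_refl _
    | succ k ih =>
        rw [Function.iterate_succ_apply', Function.iterate_succ_apply']
        calc FS f T ((FS f T)^[k] fun _ => false)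
            ≤ FS f T ((FS f S)^[k] fun _ => false) := FS_mono f hf T ih
          _ ≤ FS f S ((FS f S)^[k] fun _ => false) := by
              intro i
              simp only [FS]
              by_cases h : i ∈ S
              · simp [h, hST h]
              · by_cases h' : i ∈ T
                · simp [h, h']
                · simp [h, h']
  exact key n

/-- Key lemma: `f_i` applied to the lfp of the `insert i S`-pruned system gives
the `i`-th coordinate of the lfp of the `S`-pruned system. -/
lemma key (f : Fin n → (Fin n → Bool) → Bool) (hf : ∀ i, Monotone (f i))
    (S : Finset (Fin n)) (i : Fin n) (hi : i ∉ S) :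
    f i (L f (insert i S)) = L f S i := by
  apply le_antisymm
  · have h1 : f i (L f (insert i S)) ≤ f i (L f S) :=
      hf i (L_anti f hf (Finset.subset_insert i S))
    have h2 : f i (L f S) = L f S i := by
      have := congrFun (L_fix f hf S) i
      rw [← this]
      simp [FS, hi]
    rw [h2] at h1
    exact h1
  · cases h : f i (L f (insert i S)) with
    | true => exact Bool.le_true _
    | false =>
        -- show L f S i = false since L f (insert i S) is a fixpoint of FS f S
        have hfixS : FS f S (L f (insert i S)) = L f (insert i S) := by
          funext j
          by_cases hj : j ∈ S
          · simp [FS, hj, L_mem_false f hf (insert i S) (Finset.mem_insert_of_mem hj)]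
          · by_cases hji : j = i
            · subst hji
              simp only [FS, if_neg hj]
              rw [h, L_mem_false f hf (insert j S) (Finset.mem_insert_self j S)]
            · have hjins : j ∉ insert i S := by
                simp [Finset.mem_insert, hj, hji]
              have := congrFun (L_fix f hf (insert i S)) j
              simp only [FS, if_neg hjins] at this
              simpa [FS, hj] using this
        have hle2 := L_least f hf S _ hfixS i
        rw [L_mem_false f hf (insert i S) (Finset.mem_insert_self i S)] at hle2
        exact hle2

/-- `prunedG` computes the lfp of the pruned system. -/
lemma prunedG_eq (f : Fin n → (Fin n → Bool) → Bool) (hf : ∀ i, Monotone (f i))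
    (S : Finset (Fin n)) (i : Fin n) :
    prunedG n f S i (fun _ => false) = L f S i := by
  by_cases h : i ∈ S
  · rw [prunedG]
    simp only [dif_pos h]
    rw [L_mem_false f hf S h]
  · rw [prunedG]
    simp only [dif_neg h]
    have hrec : (fun j => prunedG n f (insert i S) j (fun _ => false)) = L f (insert i S) :=
      funext fun j => prunedG_eq f hf (insert i S) j
    rw [hrec]
    exact key f hf S i h
termination_by n - S.card
decreasing_by
  have h1 : (insert i S).card = S.card + 1 := Finset.card_insert_of_notMem h
  have h2 : (insert i S).card ≤ n := by
    simpa using Finset.card_le_univ (insert i S)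
  omega

end PrunedAux

/-- The Pruned Closed Form equals the `n`-fold iterate of the tuple function `f⃗`
on the bottom element: `g⃗_∅(0⃗) = f⃗ⁿ(0⃗)`. -/
theorem prunedClosedForm_eq_iterate {n : ℕ} (hn : 1 ≤ n)
    (f : Fin n → (Fin n → Bool) → Bool) (hf : ∀ i, Monotone (f i)) :
    (fun i => prunedG n f ∅ i (fun _ => false)) =
      (fun x i => f i x)^[n] (fun _ => false) := by
  have hFS : PrunedAux.FS f ∅ = fun x i => f i x := by
    funext x i
    simp [PrunedAux.FS]
  funext i
  rw [PrunedAux.prunedG_eq f hf ∅ i]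
  simp only [PrunedAux.L, hFS]
end

section
/- Let A be a complete lattice, 𝔹 the two-element Boolean lattice, and let F : A × 𝔹 → A and G : A × 𝔹 → 𝔹 be monotone functions. Then the least fixpoint of the map (a,b) ↦ (F(a,b), G(a,b)) on A × 𝔹 equals the least fixpoint of the map (a,b) ↦ (F(a,b), G(a,⊥)). -/
/-- For a complete lattice `A` and the two-element Boolean lattice `Bool`, and monotone
`F : A × Bool → A`, `G : A × Bool → Bool`, the least fixpoint of
`(a,b) ↦ (F(a,b), G(a,b))` equals the least fixpoint of `(a,b) ↦ (F(a,b), G(a,⊥))`. -/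
theorem lfp_eq_lfp_bot_bool {A : Type*} [CompleteLattice A]
    (F : A × Bool → A) (G : A × Bool → Bool)
    (hF : Monotone F) (hG : Monotone G) :
    OrderHom.lfp ⟨fun p => (F p, G p), fun _ _ h => Prod.mk_le_mk.2 ⟨hF h, hG h⟩⟩ =
      OrderHom.lfp ⟨fun p => (F p, G (p.1, ⊥)),
        fun _ _ h => Prod.mk_le_mk.2 ⟨hF h, hG (Prod.mk_le_mk.2 ⟨h.1, le_rfl⟩)⟩⟩ := by
  set f : (A × Bool) →o (A × Bool) :=
    ⟨fun p => (F p, G p), fun _ _ h => Prod.mk_le_mk.2 ⟨hF h, hG h⟩⟩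
  set g : (A × Bool) →o (A × Bool) :=
    ⟨fun p => (F p, G (p.1, ⊥)),
      fun _ _ h => Prod.mk_le_mk.2 ⟨hF h, hG (Prod.mk_le_mk.2 ⟨h.1, le_rfl⟩)⟩⟩
  apply le_antisymm
  · apply OrderHom.lfp_le
    have hfix := OrderHom.map_lfp g
    set p := OrderHom.lfp g with hp
    have h1 : F p = p.1 := congrArg Prod.fst hfix
    have h2 : G (p.1, ⊥) = p.2 := congrArg Prod.snd hfix
    show (F p, G p) ≤ p
    constructor
    · exact le_of_eq h1
    · show G p ≤ p.2
      cases hb : p.2 with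
      | true => exact le_top
      | false =>
          have : G p = G (p.1, ⊥) := by
            congr 1
            exact Prod.ext rfl hb
          rw [this, h2]; exact hb.le
  · apply OrderHom.lfp_le
    have hfix := OrderHom.map_lfp f
    set p := OrderHom.lfp f with hp
    show (F p, G (p.1, ⊥)) ≤ p
    constructor
    · have h1 : F p = p.1 := congrArg Prod.fst hfix
      exact h1.le
    · have h2 : G p = p.2 := congrArg Prod.snd hfix
      calc G (p.1, ⊥) ≤ G p := hG ⟨le_rfl, bot_le⟩
        _ ≤ p.2 := h2.le
end

section
/- (Bekić–Leszczyłowski Theorem.) Let A and B be complete lattices and let F : A × B → A and G : A × B → B be monotone functions. Then the least fixpoint of the map (a,b) ↦ (F(a,b), G(a,b)) on A × B equals the least fixpoint of the map (a,b) ↦ (F(a,b), lfp(b' ↦ G(a,b'))), where lfp(b' ↦ G(a,b')) denotes the least fixpoint of the monotone map b' ↦ G(a,b') on B. -/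
/-- The Bekić–Leszczyłowski Theorem: for complete lattices `A`, `B` and monotone
`F : A × B → A`, `G : A × B → B`, the least fixpoint of `(a,b) ↦ (F(a,b), G(a,b))`
equals the least fixpoint of `(a,b) ↦ (F(a,b), lfp (b' ↦ G(a,b')))`. -/
theorem bekic_leszczylowski {A B : Type*} [CompleteLattice A] [CompleteLattice B]
    (F : A × B → A) (G : A × B → B) (hF : Monotone F) (hG : Monotone G) :
    OrderHom.lfp ⟨fun p => (F p, G p), fun _ _ h => Prod.mk_le_mk.2 ⟨hF h, hG h⟩⟩ =
      OrderHom.lfp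
        ⟨fun p => (F p,
            OrderHom.lfp ⟨fun b' => G (p.1, b'),
              fun _ _ hb => hG (Prod.mk_le_mk.2 ⟨le_rfl, hb⟩)⟩),
          fun _ _ h => Prod.mk_le_mk.2 ⟨hF h,
            OrderHom.lfp.monotone fun b' => hG (Prod.mk_le_mk.2 ⟨h.1, le_rfl⟩)⟩⟩ := by
  set H : A × B →o A × B :=
    ⟨fun p => (F p, G p), fun _ _ h => Prod.mk_le_mk.2 ⟨hF h, hG h⟩⟩ with hH
  set K : A × B →o A × B :=
    ⟨fun p => (F p,
        OrderHom.lfp ⟨fun b' => G (p.1, b'),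
          fun _ _ hb => hG (Prod.mk_le_mk.2 ⟨le_rfl, hb⟩)⟩),
      fun _ _ h => Prod.mk_le_mk.2 ⟨hF h,
        OrderHom.lfp.monotone fun b' => hG (Prod.mk_le_mk.2 ⟨h.1, le_rfl⟩)⟩⟩ with hK
  apply le_antisymm
  · -- lfp H ≤ lfp K
    apply OrderHom.lfp_le
    set q := OrderHom.lfp K with hq
    have hfix : K q = q := OrderHom.map_lfp K
    have h1 : F q = q.1 := congrArg Prod.fst hfix
    have h2 : OrderHom.lfp ⟨fun b' => G (q.1, b'),
        fun _ _ hb => hG (Prod.mk_le_mk.2 ⟨le_rfl, hb⟩)⟩ = q.2 := congrArg Prod.snd hfix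
    have hinner := OrderHom.map_lfp (⟨fun b' => G (q.1, b'),
      fun _ _ hb => hG (Prod.mk_le_mk.2 ⟨le_rfl, hb⟩)⟩ : B →o B)
    rw [h2] at hinner
    have h3 : G (q.1, q.2) = q.2 := hinner
    have : H q = q := by
      show (F q, G q) = q
      rw [h1]
      have : G q = q.2 := by rw [← h3]
      rw [this]
    exact le_of_eq this
  · -- lfp K ≤ lfp H
    apply OrderHom.lfp_le
    set p := OrderHom.lfp H with hp
    have hfix : H p = p := OrderHom.map_lfp H
    have h1 : F p = p.1 := congrArg Prod.fst hfix
    have h2 : G p = p.2 := congrArg Prod.snd hfix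
    have h3 : OrderHom.lfp ⟨fun b' => G (p.1, b'),
        fun _ _ hb => hG (Prod.mk_le_mk.2 ⟨le_rfl, hb⟩)⟩ ≤ p.2 := by
      apply OrderHom.lfp_le
      show G (p.1, p.2) ≤ p.2
      exact le_of_eq h2
    show (F p, _) ≤ p
    rw [h1]
    exact Prod.mk_le_mk.2 ⟨le_rfl, h3⟩
end

section
/- For every index i ∈ {1,…,n} and every proper subset S ⊊ {1,…,n}, one has g_{S,i}(0⃗) ≤ f_i(f⃗^{n−|S|−1}(0⃗)), where |S| denotes the cardinality of S. -/
lemma prunedG_le_iterate_aux {n : ℕ}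
    (f : Fin n → (Fin n → Bool) → Bool) (hf : ∀ i, Monotone (f i)) :
    ∀ k (S : Finset (Fin n)) (i : Fin n), n - S.card = k → S ⊂ Finset.univ →
    prunedG n f S i (fun _ => false) ≤
      f i ((fun x j => f j x)^[n - S.card - 1] (fun _ => false)) := by
  intro k
  induction k using Nat.strong_induction_on with
  | _ k ih =>
    intro S i hk hS
    have hcard : S.card < n := by
      have := Finset.card_lt_card hS
      simpa using this
    rw [prunedG]
    by_cases h : i ∈ S
    · simp [h]
    simp only [h, dif_neg, not_false_iff]
    have hins : (insert i S).card = S.card + 1 := Finset.card_insert_of_notMem h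
    by_cases huniv : insert i S = Finset.univ
    · have h0 : n - S.card - 1 = 0 := by
        have : (insert i S).card = n := by simp [huniv]
        omega
      rw [h0]
      simp only [Function.iterate_zero, id]
      apply hf i
      intro j
      have hj : j ∈ insert i S := by rw [huniv]; exact Finset.mem_univ j
      simp [prunedG, hj]
    · have hsub : insert i S ⊂ Finset.univ :=
        lt_of_le_of_ne (Finset.subset_univ _) huniv
      have hcard2 : (insert i S).card < n := by
        have := Finset.card_lt_card hsub
        simpa using this
      have hstep : ∀ j, prunedG n f (insert i S) j (fun _ => false) ≤
          f j ((fun x j => f j x)^[n - S.card - 2] (fun _ => false)) := by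
        intro j
        have := ih (n - (insert i S).card) (by omega) (insert i S) j rfl hsub
        have he : n - (insert i S).card - 1 = n - S.card - 2 := by omega
        rwa [he] at this
      have hgoal : ((fun x j => f j x)^[n - S.card - 1] (fun _ => false)) =
          fun j => f j ((fun x j => f j x)^[n - S.card - 2] (fun _ => false)) := by
        have he : n - S.card - 1 = (n - S.card - 2) + 1 := by omega
        rw [he, Function.iterate_succ_apply']
      rw [hgoal]
      exact hf i (fun j => hstep j)

/-- Lemma 1: for every index `i` and every proper subset `S ⊊ {1,…,n}`,
`g_{S,i}(0⃗) ≤ f_i(f⃗^{n−|S|−1}(0⃗))`. -/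
theorem prunedG_le_iterate {n : ℕ} (hn : 1 ≤ n)
    (f : Fin n → (Fin n → Bool) → Bool) (hf : ∀ i, Monotone (f i))
    (i : Fin n) (S : Finset (Fin n)) (hS : S ⊂ Finset.univ) :
    prunedG n f S i (fun _ => false) ≤
      f i ((fun x j => f j x)^[n - S.card - 1] (fun _ => false)) := by
  exact prunedG_le_iterate_aux f hf _ S i rfl hS
end

section
/- The Pruned Closed Form is componentwise at most the n-fold iterate: (g_{∅,1}(0⃗), …, g_{∅,n}(0⃗)) ≤ f⃗ⁿ(0⃗) in the componentwise order on 𝔹ⁿ. -/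
private lemma prunedG_aux {n : ℕ} (f : Fin n → (Fin n → Bool) → Bool)
    (hf : ∀ i, Monotone (f i)) :
    ∀ k (S : Finset (Fin n)) (i : Fin n), n - S.card ≤ k →
      prunedG n f S i (fun _ => false) ≤
        ((fun x i => f i x)^[n - S.card] (fun _ => false)) i := by
  intro k
  induction k with
  | zero =>
    intro S i hk
    interval_cases h : n - S.card
    have : i ∈ S := by
      by_contra hi
      have := Finset.card_lt_card (Finset.ssubset_insert hi)
      have h2 : (insert i S).card ≤ n := by
        simpa using Finset.card_le_univ (insert i S)
      omega
    rw [prunedG]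
    simp [this]
  | succ k ih =>
    intro S i hk
    rw [prunedG]
    by_cases hi : i ∈ S
    · simp [hi]
    · simp only [hi, dite_false]
      have hcard : (insert i S).card = S.card + 1 := Finset.card_insert_of_notMem hi
      have hle : (insert i S).card ≤ n := by
        simpa using Finset.card_le_univ (insert i S)
      have hm : n - S.card = (n - (insert i S).card) + 1 := by omega
      rw [hm, Function.iterate_succ_apply']
      exact hf i (fun j => ih (insert i S) j (by omega))

/-- Corollary: the Pruned Closed Form is componentwise at most the `n`-fold iterate:
`g⃗_∅(0⃗) ≤ f⃗ⁿ(0⃗)`. -/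
theorem prunedClosedForm_le_iterate {n : ℕ} (hn : 1 ≤ n)
    (f : Fin n → (Fin n → Bool) → Bool) (hf : ∀ i, Monotone (f i)) :
    (fun i => prunedG n f ∅ i (fun _ => false)) ≤
      (fun x i => f i x)^[n] (fun _ => false) := by
  intro i
  have := prunedG_aux f hf n ∅ i (by simp)
  simpa using this
end

section
/- Let i ∈ {1,…,n}, S ⊆ {1,…,n}, m ≥ 0, and T = S ∪ {i}. If f_i(h⃗_Sᵐ(0⃗)) = 0, then h⃗_Sᵖ(0⃗) = h⃗_Tᵖ(0⃗) for every p with 0 ≤ p ≤ m. -/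
/-- The family of functions `h_{S,j}`: `h_{S,j} = f_j` if `j ∉ S`, and the
constant-`false` (constant-0) function if `j ∈ S`. -/
def hFam (n : ℕ) (f : Fin n → (Fin n → Bool) → Bool)
    (S : Finset (Fin n)) (j : Fin n) : (Fin n → Bool) → Bool :=
  if j ∈ S then fun _ => false else f j

lemma hFam_mono {n : ℕ} (f : Fin n → (Fin n → Bool) → Bool) (hf : ∀ i, Monotone (f i))
    (S : Finset (Fin n)) : Monotone (fun x (j : Fin n) => hFam n f S j x) := by
  intro x y hxy j
  simp only [hFam]
  split
  · exact le_rfl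
  · exact hf j hxy

lemma hFam_iter_mono {n : ℕ} (f : Fin n → (Fin n → Bool) → Bool) (hf : ∀ i, Monotone (f i))
    (S : Finset (Fin n)) {p q : ℕ} (hpq : p ≤ q) :
    (fun x (j : Fin n) => hFam n f S j x)^[p] (fun _ => false) ≤
      (fun x (j : Fin n) => hFam n f S j x)^[q] (fun _ => false) := by
  induction q with
  | zero => simp_all
  | succ q ih =>
    rcases Nat.lt_or_ge p (q+1) with h | h
    · refine le_trans (ih (Nat.lt_succ_iff.mp h)) ?_
      have key : ∀ r : ℕ, (fun x (j : Fin n) => hFam n f S j x)^[r] (fun _ => false) ≤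
          (fun x (j : Fin n) => hFam n f S j x)^[r+1] (fun _ => false) := by
        intro r
        induction r with
        | zero => intro j; simp
        | succ r ih2 =>
          rw [Function.iterate_succ_apply', Function.iterate_succ_apply']
          exact hFam_mono f hf S ih2
      exact key q
    · have : p = q + 1 := le_antisymm hpq h
      subst this; exact le_rfl

/-- Lemma 3: for `T = S ∪ {i}`, if `f_i(h⃗_Sᵐ(0⃗)) = 0` then `h⃗_Sᵖ(0⃗) = h⃗_Tᵖ(0⃗)`
for every `p ≤ m`. -/
theorem hFam_iterate_eq_of_apply_eq_false {n : ℕ} (hn : 1 ≤ n)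
    (f : Fin n → (Fin n → Bool) → Bool) (hf : ∀ i, Monotone (f i))
    (i : Fin n) (S : Finset (Fin n)) (m : ℕ)
    (h0 : f i ((fun x j => hFam n f S j x)^[m] (fun _ => false)) = false) :
    ∀ p ≤ m,
      (fun x j => hFam n f S j x)^[p] (fun _ => false) =
        (fun x j => hFam n f (insert i S) j x)^[p] (fun _ => false) := by
  have hfi : ∀ p ≤ m, f i ((fun x j => hFam n f S j x)^[p] (fun _ => false)) = false := by
    intro p hp
    have := hf i (hFam_iter_mono f hf S hp)
    rw [h0] at this
    exact le_antisymm this (Bool.false_le _)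
  intro p hp
  induction p with
  | zero => rfl
  | succ p ih =>
    rw [Function.iterate_succ_apply', Function.iterate_succ_apply',
      ← ih (Nat.le_of_succ_le hp)]
    funext j
    unfold hFam
    by_cases hj : j = i
    · subst hj
      simp only [Finset.mem_insert, true_or, if_pos]
      split
      · rfl
      · exact (hfi p (Nat.le_of_succ_le hp)).symm ▸ rfl
    · simp only [Finset.mem_insert, hj, false_or]
end
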